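/- Let X be a real-valued random variable supported in [a, b], with mean μ and mean absolute deviation E|X − μ| = d > 0. Suppose t < μ − d(b−μ)/(2(b−μ) − d) and P(X ≥ t) > 0. Then E[X | X ≥ t] ≤ μ + d(μ−t)/(2(μ−t) − d). -/

import Mathlib

open MeasureTheory

theorem stmt3 (P : Measure ℝ) [IsProbabilityMeasure P] (a b m d t : ℝ)
    (hsupp : ∀ᵐ x ∂P, x ∈ Set.Icc a b)
    (hX : Integrable (fun x => x) P)
    (hm : m ∈ Set.Ioo a b)
    (hmean : ∫ x, x ∂P = m)
    (hmad : ∫ x, |x - m| ∂P = d)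
    (hd : 0 < d) (hdb : d < 2 * (b - m))
    (ht : t < m - d * (b - m) / (2 * (b - m) - d))
    (hpos : 0 < (P {x : ℝ | t ≤ x}).toReal) :
    (∫ x in {x : ℝ | t ≤ x}, x ∂P) / (P {x : ℝ | t ≤ x}).toReal
      ≤ m + d * (m - t) / (2 * (m - t) - d) := by
  have hbm : 0 < b - m := by linarith [hm.2]
  have hcd : 0 < 2 * (b - m) - d := by linarith
  -- m - t > d/2
  have hu : d / 2 < m - t := by
    have h1 : d / 2 < d * (b - m) / (2 * (b - m) - d) := by
      rw [div_lt_div_iff₀ (by norm_num) hcd]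
      nlinarith
    linarith
  set u : ℝ := m - t with hu_def
  have h2ud : 0 < 2 * u - d := by linarith
  set S : Set ℝ := {x : ℝ | t ≤ x} with hS_def
  have hS : MeasurableSet S := measurableSet_Ici
  have hXm : Integrable (fun x => x - m) P := hX.sub (integrable_const m)
  have hmX : Integrable (fun x => m - x) P := (integrable_const m).sub hX
  have habs : Integrable (fun x => |x - m|) P := hXm.abs
  have hmean0 : ∫ x, (x - m) ∂P = 0 := by
    rw [integral_sub hX (integrable_const m), hmean, integral_const]
    simp
  -- max functions
  have hmax1 : Integrable (fun x => max (x - m) 0) P := by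
    have : (fun x => max (x - m) 0) = fun x => ((x - m) + |x - m|) / 2 := by
      funext x
      rcases le_total (x - m) 0 with h | h
      · rw [max_eq_right h, abs_of_nonpos h]; ring
      · rw [max_eq_left h, abs_of_nonneg h]; ring
    rw [this]
    exact (hXm.add habs).div_const 2
  have hmax2 : Integrable (fun x => max (m - x) 0) P := by
    have : (fun x => max (m - x) 0) = fun x => ((m - x) + |x - m|) / 2 := by
      funext x
      rcases le_total (x - m) 0 with h | h
      · rw [max_eq_left (by linarith), abs_of_nonpos h]; ring
      · rw [max_eq_right (by linarith), abs_of_nonneg h]; ring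
    rw [this]
    exact (hmX.add habs).div_const 2
  have hImax1 : ∫ x, max (x - m) 0 ∂P = d / 2 := by
    have : (fun x => max (x - m) 0) = fun x => ((x - m) + |x - m|) / 2 := by
      funext x
      rcases le_total (x - m) 0 with h | h
      · rw [max_eq_right h, abs_of_nonpos h]; ring
      · rw [max_eq_left h, abs_of_nonneg h]; ring
    rw [this]
    rw [integral_div, integral_add hXm habs, hmean0, hmad]
    ring
  have hImax2 : ∫ x, max (m - x) 0 ∂P = d / 2 := by
    have : (fun x => max (m - x) 0) = fun x => ((m - x) + |x - m|) / 2 := by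
      funext x
      rcases le_total (x - m) 0 with h | h
      · rw [max_eq_left (by linarith), abs_of_nonpos h]; ring
      · rw [max_eq_right (by linarith), abs_of_nonneg h]; ring
    rw [this]
    rw [integral_div, integral_add hmX habs]
    have : ∫ x, (m - x) ∂P = 0 := by
      rw [integral_sub (integrable_const m) hX, hmean, integral_const]; simp
    rw [this, hmad]; ring
  set p : ℝ := (P S).toReal with hp_def
  set q : ℝ := (P Sᶜ).toReal with hq_def
  have hpq : p + q = 1 := by
    rw [hp_def, hq_def, ← ENNReal.toReal_add (measure_ne_top _ _) (measure_ne_top _ _),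
      measure_add_measure_compl hS]
    simp
  -- Markov bound: u * q ≤ d/2
  have hmarkov : u * q ≤ d / 2 := by
    have h1 : ∫ x in Sᶜ, (m - t) ∂P ≤ ∫ x in Sᶜ, (m - x) ∂P := by
      apply setIntegral_mono_on (integrableOn_const (measure_ne_top _ _))
        hmX.integrableOn hS.compl
      intro x hx
      have : ¬ t ≤ x := hx
      linarith [not_le.mp this]
    have h2 : ∫ x in Sᶜ, (m - x) ∂P ≤ ∫ x in Sᶜ, max (m - x) 0 ∂P :=
      setIntegral_mono_on hmX.integrableOn hmax2.integrableOn hS.compl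
        (fun x _ => le_max_left _ _)
    have h3 : ∫ x in Sᶜ, max (m - x) 0 ∂P ≤ ∫ x, max (m - x) 0 ∂P :=
      setIntegral_le_integral hmax2 (ae_of_all _ fun x => le_max_right _ _)
    have h4 : ∫ x in Sᶜ, (m - t) ∂P = q * (m - t) := by
      rw [setIntegral_const]; simp [hq_def, smul_eq_mul, measureReal_def]
    rw [h4] at h1
    rw [hImax2] at h3
    have : q * (m - t) ≤ d / 2 := by linarith
    linarith [this]
  -- upper bound on set integral
  have hIb : ∫ x in S, x ∂P ≤ d / 2 + m * p := by
    have hdec : ∫ x in S, x ∂P = (∫ x in S, (x - m) ∂P) + m * p := by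
      have : ∫ x in S, (x - m) ∂P = (∫ x in S, x ∂P) - (∫ x in S, (m : ℝ) ∂P) :=
        integral_sub hX.integrableOn (integrableOn_const (measure_ne_top _ _))
      rw [this, setIntegral_const]
      simp [hp_def, smul_eq_mul, measureReal_def]
      ring
    have h2 : ∫ x in S, (x - m) ∂P ≤ ∫ x in S, max (x - m) 0 ∂P :=
      setIntegral_mono_on hXm.integrableOn hmax1.integrableOn hS
        (fun x _ => le_max_left _ _)
    have h3 : ∫ x in S, max (x - m) 0 ∂P ≤ ∫ x, max (x - m) 0 ∂P :=
      setIntegral_le_integral hmax1 (ae_of_all _ fun x => le_max_right _ _)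
    rw [hImax1] at h3
    linarith
  -- finish
  have hp : 0 < p := hpos
  rw [div_le_iff₀ hp]
  have key : d / 2 ≤ d * u / (2 * u - d) * p := by
    rw [div_mul_eq_mul_div, le_div_iff₀ h2ud]
    have hduq : d * (u * q) ≤ d * (d / 2) := mul_le_mul_of_nonneg_left hmarkov hd.le
    have hid : d * u * p = d * u - d * (u * q) := by
      have hq1 : p = 1 - q := by linarith
      rw [hq1]; ring
    nlinarith [hduq, hid]
  have expand : (m + d * (m - t) / (2 * (m - t) - d)) * p
      = m * p + (d * u / (2 * u - d)) * p := by
    rw [hu_def]; ring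
  rw [expand]
  linarith
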